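/- Let s > 1, C > 0, and ω₁, ω₂ > 0 with c₀ h^{1−1/s} ≤ ω_t ≤ C₀ h^{1−1/s} for all t ∈ [0,1], where ω_t = (1−t)ω₁ + tω₂ and 0 < h ≤ 1. Then h^{−n} ∫₀¹ dt ∫_{ℂ^n} exp(−F_{ω_t}(x)/h − C·ω_t^{−1/(s−1)}·[|x| > ω_t] − C·|x|^{−1/(s−1)}·[|x| ≤ ω_t]) L(dx) ≤ C'·exp(−c'·h^{−1/s}) for constants C', c' > 0 independent of h, where F_ω is as before (F_ω(x)=|x|² for |x|≤ω, ω|x| for |x|>ω) and [·] denotes the indicator. -/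

import Mathlib

open MeasureTheory

/-- Euclidean norm on `ℂ^n`. -/
noncomputable def euclNorm {n : ℕ} (z : Fin n → ℂ) : ℝ :=
  Real.sqrt (∑ j, ‖z j‖ ^ 2)

/-- `F_ω(z) = |z|²` for `|z| ≤ ω`, `ω|z|` for `|z| > ω`. -/
noncomputable def Fw {n : ℕ} (ω : ℝ) (z : Fin n → ℂ) : ℝ :=
  if euclNorm z ≤ ω then euclNorm z ^ 2 else ω * euclNorm z

lemma euclNorm_nonneg {n : ℕ} (z : Fin n → ℂ) : 0 ≤ euclNorm z := Real.sqrt_nonneg _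

lemma continuous_euclNorm {n : ℕ} : Continuous (euclNorm (n := n)) := by
  unfold euclNorm; fun_prop

lemma norm_le_euclNorm {n : ℕ} (z : Fin n → ℂ) : ‖z‖ ≤ euclNorm z := by
  rw [pi_norm_le_iff_of_nonneg (euclNorm_nonneg z)]
  intro i
  have h1 : ‖z i‖ ^ 2 ≤ ∑ j, ‖z j‖ ^ 2 :=
    Finset.single_le_sum (f := fun j => ‖z j‖ ^ 2) (fun j _ => by positivity) (Finset.mem_univ i)
  calc ‖z i‖ = Real.sqrt (‖z i‖ ^ 2) := by
        rw [Real.sqrt_sq (norm_nonneg _)]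
    _ ≤ euclNorm z := Real.sqrt_le_sqrt h1

lemma euclNorm_pos {n : ℕ} {z : Fin n → ℂ} (hz : z ≠ 0) : 0 < euclNorm z := by
  rcases (euclNorm_nonneg z).lt_or_eq with h | h
  · exact h
  · exfalso; apply hz
    have := norm_le_euclNorm z
    rw [← h] at this
    exact norm_le_zero_iff.mp this

lemma integrable_exp_neg_euclNorm (n : ℕ) {b : ℝ} (hb : 0 < b) :
    Integrable (fun x : Fin n → ℂ => Real.exp (-(b * euclNorm x))) := by
  set d : ℕ := Module.finrank ℝ (Fin n → ℂ) with hd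
  set m : ℕ := d + 1 with hm
  have hint : Integrable (fun x : Fin n → ℂ => (1 + ‖x‖) ^ (-(m : ℝ))) volume :=
    integrable_one_add_norm (by exact_mod_cast Nat.lt_succ_self d)
  have hmpos : (0:ℝ) < m := by positivity
  refine (hint.const_mul ((1 + m / b) ^ m)).mono'
    ((Real.continuous_exp.comp
      ((continuous_const.mul continuous_euclNorm).neg)).aestronglyMeasurable) ?_
  filter_upwards with x
  have h1 : ‖x‖ ≤ euclNorm x := norm_le_euclNorm x
  have h0 : (0:ℝ) ≤ ‖x‖ := norm_nonneg x
  have hA : (0:ℝ) < (1 + m / b) ^ m := by positivity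
  rw [Real.norm_eq_abs, abs_of_nonneg (Real.exp_nonneg _)]
  have key : (1 + ‖x‖) ^ m ≤ (1 + m / b) ^ m * Real.exp (b * ‖x‖) := by
    have step : 1 + ‖x‖ ≤ (1 + m / b) * Real.exp (b * ‖x‖ / m) := by
      have h2 : 1 + b * ‖x‖ / m ≤ Real.exp (b * ‖x‖ / m) := by
        have := Real.add_one_le_exp (b * ‖x‖ / m); linarith
      have h3 : 1 + ‖x‖ ≤ (1 + m / b) * (1 + b * ‖x‖ / m) := by
        have : (1 + m / b) * (1 + b * ‖x‖ / m) = 1 + ‖x‖ + b * ‖x‖ / m + m / b := by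
          field_simp; ring
        rw [this]
        have : (0:ℝ) ≤ b * ‖x‖ / m := by positivity
        have : (0:ℝ) ≤ m / b := by positivity
        linarith [show (0:ℝ) ≤ b * ‖x‖ / m by positivity]
      calc 1 + ‖x‖ ≤ (1 + m / b) * (1 + b * ‖x‖ / m) := h3
        _ ≤ (1 + m / b) * Real.exp (b * ‖x‖ / m) := by
            apply mul_le_mul_of_nonneg_left h2 (by positivity)
    calc (1 + ‖x‖) ^ m ≤ ((1 + m / b) * Real.exp (b * ‖x‖ / m)) ^ m :=
          pow_le_pow_left₀ (by positivity) step m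
      _ = (1 + m / b) ^ m * Real.exp (b * ‖x‖ / m) ^ m := mul_pow _ _ _
      _ = (1 + m / b) ^ m * Real.exp (b * ‖x‖) := by
          rw [← Real.exp_nat_mul]
          congr 2
          field_simp
  have hrp : (1 + ‖x‖) ^ (-(m : ℝ)) = ((1 + ‖x‖) ^ m)⁻¹ := by
    rw [Real.rpow_neg (by positivity), Real.rpow_natCast]
  rw [hrp]
  have e1 : Real.exp (-(b * ‖x‖)) * Real.exp (b * ‖x‖) = 1 := by
    rw [← Real.exp_add]; simp
  have hle : Real.exp (-(b * euclNorm x)) ≤ Real.exp (-(b * ‖x‖)) := by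
    apply Real.exp_le_exp.2; nlinarith
  have h2 : Real.exp (-(b * ‖x‖)) * (1 + ‖x‖) ^ m ≤ (1 + m / b) ^ m := by
    nlinarith [Real.exp_nonneg (-(b * ‖x‖)), pow_pos (show (0:ℝ) < 1 + ‖x‖ by positivity) m]
  calc Real.exp (-(b * euclNorm x)) ≤ Real.exp (-(b * ‖x‖)) := hle
    _ ≤ (1 + m / b) ^ m * ((1 + ‖x‖) ^ m)⁻¹ := by
        rw [← div_eq_mul_inv, le_div_iff₀ (by positivity : (0:ℝ) < (1 + ‖x‖) ^ m)]
        exact h2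

lemma integrable_indicator_euclNorm (n : ℕ) (R : ℝ) :
    Integrable (fun x : Fin n → ℂ => if euclNorm x ≤ R then (1:ℝ) else 0) := by
  have hS : MeasurableSet {x : Fin n → ℂ | euclNorm x ≤ R} :=
    (isClosed_le continuous_euclNorm continuous_const).measurableSet
  have heq : (fun x : Fin n → ℂ => if euclNorm x ≤ R then (1:ℝ) else 0)
      = Set.indicator {x : Fin n → ℂ | euclNorm x ≤ R} (fun _ => (1:ℝ)) := by
    ext x
    by_cases hx : euclNorm x ≤ R <;>
      simp [Set.indicator_apply, hx]
  rw [heq, integrable_indicator_iff hS]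
  refine integrableOn_const (ne_of_lt ?_) (by simp)
  refine lt_of_le_of_lt (measure_mono ?_)
    (measure_closedBall_lt_top (x := (0 : Fin n → ℂ)) (r := max R 0))
  intro x hx
  simp only [Set.mem_setOf_eq] at hx
  simp only [Metric.mem_closedBall, dist_zero_right]
  exact le_trans (le_trans (norm_le_euclNorm x) hx) (le_max_left _ _)

lemma inner_bound (n : ℕ) (hn : 1 ≤ n) {s C c₀ C₀ h ω : ℝ} (hs : 1 < s)
    (hC : 0 < C) (hc₀ : 0 < c₀) (hC₀ : 0 < C₀) (hh : 0 < h) (hh1 : h ≤ 1)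
    (hω1 : c₀ * h ^ (1 - 1/s) ≤ ω) (hω2 : ω ≤ C₀ * h ^ (1 - 1/s)) :
    ∫ x : Fin n → ℂ, Real.exp (-(Fw ω x)/h -
        (if ω < euclNorm x then C * ω ^ (-(1/(s-1))) else C * euclNorm x ^ (-(1/(s-1))))) ≤
      Real.exp (-(C * C₀ ^ (-(1/(s-1))) * h ^ (-(1/s)))) *
        ∫ x : Fin n → ℂ, ((if euclNorm x ≤ C₀ then (1:ℝ) else 0) +
          Real.exp (-(c₀ * euclNorm x))) := by
  have hs0 : (0:ℝ) < s := by linarith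
  have hs1 : (0:ℝ) < s - 1 := by linarith
  set r : ℝ := 1/(s-1) with hrdef
  have hr : 0 < r := by positivity
  set u : ℝ := h ^ (-(1/s)) with hudef
  set c₁ : ℝ := C * C₀ ^ (-r) with hc₁def
  have hc₁ : 0 < c₁ := mul_pos hC (Real.rpow_pos_of_pos hC₀ _)
  set G : (Fin n → ℂ) → ℝ := fun x =>
    (if euclNorm x ≤ C₀ then (1:ℝ) else 0) + Real.exp (-(c₀ * euclNorm x)) with hGdef
  have hGint : Integrable G :=
    (integrable_indicator_euclNorm n C₀).add (integrable_exp_neg_euclNorm n hc₀)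
  have hGnn : ∀ x, 0 ≤ G x := by
    intro x
    have : (0:ℝ) ≤ if euclNorm x ≤ C₀ then (1:ℝ) else 0 := by positivity
    have := Real.exp_nonneg (-(c₀ * euclNorm x))
    simp only [hGdef]
    positivity
  have hhe : 0 < h ^ (1 - 1/s) := Real.rpow_pos_of_pos hh _
  have hωpos : 0 < ω := lt_of_lt_of_le (by positivity) hω1
  have hu1 : 1 ≤ u := Real.one_le_rpow_of_pos_of_le_one_of_nonpos hh hh1 (by
    have : (0:ℝ) < 1/s := by positivity
    linarith)
  have hupos : 0 < u := Real.rpow_pos_of_pos hh _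
  have hCr : (C₀ * h ^ (1 - 1/s)) ^ (-r) = C₀ ^ (-r) * u := by
    rw [Real.mul_rpow hC₀.le (Real.rpow_nonneg hh.le _), ← Real.rpow_mul hh.le]
    have hexp : (1 - 1/s) * (-r) = -(1/s) := by
      rw [hrdef]
      field_simp
    rw [hexp]
  have hkey : c₁ * u ≤ C * ω ^ (-r) := by
    have h1 : (C₀ * h ^ (1 - 1/s)) ^ (-r) ≤ ω ^ (-r) :=
      Real.rpow_le_rpow_of_nonpos hωpos hω2 (by linarith)
    rw [hCr] at h1
    calc c₁ * u = C * (C₀ ^ (-r) * u) := by ring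
      _ ≤ C * ω ^ (-r) := mul_le_mul_of_nonneg_left h1 hC.le
  rw [← integral_const_mul]
  apply integral_mono_of_nonneg
  · exact Filter.Eventually.of_forall fun x => Real.exp_nonneg _
  · exact hGint.const_mul _
  · have hnull : volume ({(0 : Fin n → ℂ)} : Set (Fin n → ℂ)) = 0 := by
      have : Nonempty (Fin n) := ⟨⟨0, hn⟩⟩
      exact measure_singleton 0
    have h0 : ∀ᵐ x : Fin n → ℂ, x ≠ 0 := by
      rw [MeasureTheory.ae_iff]
      simpa using hnull
    filter_upwards [h0] with x hx
    by_cases hcase : ω < euclNorm x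
    · have hFw : Fw ω x = ω * euclNorm x := by
        rw [Fw, if_neg (not_le.mpr hcase)]
      rw [hFw, if_pos hcase]
      have hG1 : Real.exp (-(c₁ * u)) * Real.exp (-(c₀ * euclNorm x)) ≤
          Real.exp (-(c₁ * u)) * G x := by
        apply mul_le_mul_of_nonneg_left _ (Real.exp_nonneg _)
        simp only [hGdef]
        exact le_add_of_nonneg_left (by positivity)
      refine le_trans ?_ hG1
      rw [← Real.exp_add]
      apply Real.exp_le_exp.2
      have hxnn := euclNorm_nonneg x
      have h1 : h ^ ((1:ℝ) - 1/s) = u * h := by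
        rw [show (1:ℝ) - 1/s = -(1/s) + 1 by ring, Real.rpow_add hh, Real.rpow_one, hudef]
      have hdiv : h ^ (1 - 1/s) / h = u := by
        rw [h1, mul_div_assoc, div_self hh.ne', mul_one]
      have h2 : c₀ * euclNorm x ≤ ω * euclNorm x / h := by
        have ha : c₀ * h ^ (1 - 1/s) * euclNorm x ≤ ω * euclNorm x :=
          mul_le_mul_of_nonneg_right hω1 hxnn
        have hb : c₀ * h ^ (1 - 1/s) * euclNorm x / h = c₀ * euclNorm x * u := by
          rw [← hdiv]; field_simp
        have hc : c₀ * euclNorm x ≤ c₀ * euclNorm x * u := by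
          nlinarith [mul_nonneg hc₀.le hxnn]
        calc c₀ * euclNorm x ≤ c₀ * euclNorm x * u := hc
          _ = c₀ * h ^ (1 - 1/s) * euclNorm x / h := hb.symm
          _ ≤ ω * euclNorm x / h := by gcongr
      rw [neg_div]
      linarith [hkey]
    · push_neg at hcase
      have hFw : Fw ω x = euclNorm x ^ 2 := by rw [Fw, if_pos hcase]
      rw [hFw, if_neg (not_lt.mpr hcase)]
      have hxpos : 0 < euclNorm x := euclNorm_pos hx
      have h3 : c₁ * u ≤ C * euclNorm x ^ (-r) := by
        have := Real.rpow_le_rpow_of_nonpos hxpos hcase (by linarith : -r ≤ 0)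
        calc c₁ * u ≤ C * ω ^ (-r) := hkey
          _ ≤ C * euclNorm x ^ (-r) := mul_le_mul_of_nonneg_left this hC.le
      have hif : (if euclNorm x ≤ C₀ then (1:ℝ) else 0) = 1 := by
        rw [if_pos]
        calc euclNorm x ≤ ω := hcase
          _ ≤ C₀ * h ^ (1 - 1/s) := hω2
          _ ≤ C₀ * 1 := by
              apply mul_le_mul_of_nonneg_left _ hC₀.le
              apply Real.rpow_le_one hh.le hh1
              have h1s : 1/s ≤ 1 := by
                rw [div_le_one hs0]; linarith
              linarith
          _ = C₀ := mul_one _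
      have hG1 : Real.exp (-(c₁ * u)) * 1 ≤ Real.exp (-(c₁ * u)) * G x := by
        apply mul_le_mul_of_nonneg_left _ (Real.exp_nonneg _)
        simp only [hGdef, hif]
        have := Real.exp_nonneg (-(c₀ * euclNorm x))
        linarith
      refine le_trans ?_ hG1
      rw [mul_one]
      apply Real.exp_le_exp.2
      rw [neg_div]
      have : 0 ≤ euclNorm x ^ 2 / h := by positivity
      linarith

/-- the Schur bound for the contour-parameter deformation: with
`ω_t = (1−t)ω₁ + tω₂ ≍ h^{1−1/s}`, one has
`h^{-n} ∫₀¹∫ exp(-F_{ω_t}(x)/h − C ω_t^{-1/(s-1)}[|x|>ω_t] − C|x|^{-1/(s-1)}[|x|≤ω_t])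
  ≤ C' exp(−c' h^{-1/s})`. -/
theorem deformation_schur_bound (n : ℕ) (hn : 1 ≤ n) (s C c₀ C₀ : ℝ) (hs : 1 < s)
    (hC : 0 < C) (hc₀ : 0 < c₀) (hC₀ : 0 < C₀) :
    ∃ C' c' : ℝ, 0 < C' ∧ 0 < c' ∧ ∀ h ω₁ ω₂ : ℝ, 0 < h → h ≤ 1 →
      (∀ t : ℝ, 0 ≤ t → t ≤ 1 →
        c₀ * h ^ (1 - 1 / s) ≤ (1 - t) * ω₁ + t * ω₂ ∧
        (1 - t) * ω₁ + t * ω₂ ≤ C₀ * h ^ (1 - 1 / s)) →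
      h ^ (-(n : ℝ)) *
          (∫ t in Set.Icc (0 : ℝ) 1, ∫ x : Fin n → ℂ,
            Real.exp (-(Fw ((1 - t) * ω₁ + t * ω₂) x) / h -
              (if ((1 - t) * ω₁ + t * ω₂) < euclNorm x then
                C * ((1 - t) * ω₁ + t * ω₂) ^ (-(1 / (s - 1)))
              else
                C * euclNorm x ^ (-(1 / (s - 1)))))) ≤
        C' * Real.exp (-c' * h ^ (-(1 / s))) := by
  have hs0 : (0:ℝ) < s := by linarith
  have hc₁ : 0 < C * C₀ ^ (-(1/(s-1))) := mul_pos hC (Real.rpow_pos_of_pos hC₀ _)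
  set c₁ : ℝ := C * C₀ ^ (-(1/(s-1))) with hc₁def
  set m : ℕ := ⌈(n:ℝ) * s⌉₊ with hmdef
  set K : ℝ := ∫ x : Fin n → ℂ, ((if euclNorm x ≤ C₀ then (1:ℝ) else 0) +
      Real.exp (-(c₀ * euclNorm x))) with hKdef
  have hK0 : 0 ≤ K := integral_nonneg fun x => by positivity
  refine ⟨(K + 1) * ((Nat.factorial m : ℝ) * (2/c₁)^m), c₁/2, by positivity, by positivity, ?_⟩
  intro h ω₁ ω₂ hh hh1 hω
  set u : ℝ := h ^ (-(1/s)) with hudef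
  have hupos : 0 < u := Real.rpow_pos_of_pos hh _
  have hu1 : 1 ≤ u := Real.one_le_rpow_of_pos_of_le_one_of_nonpos hh hh1 (by
    have : (0:ℝ) < 1/s := by positivity
    linarith)
  have houter : (∫ t in Set.Icc (0 : ℝ) 1, ∫ x : Fin n → ℂ,
      Real.exp (-(Fw ((1 - t) * ω₁ + t * ω₂) x) / h -
        (if ((1 - t) * ω₁ + t * ω₂) < euclNorm x then
          C * ((1 - t) * ω₁ + t * ω₂) ^ (-(1 / (s - 1)))
        else
          C * euclNorm x ^ (-(1 / (s - 1)))))) ≤ Real.exp (-(c₁ * u)) * K := by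
    calc (∫ t in Set.Icc (0 : ℝ) 1, ∫ x : Fin n → ℂ,
        Real.exp (-(Fw ((1 - t) * ω₁ + t * ω₂) x) / h -
          (if ((1 - t) * ω₁ + t * ω₂) < euclNorm x then
            C * ((1 - t) * ω₁ + t * ω₂) ^ (-(1 / (s - 1)))
          else
            C * euclNorm x ^ (-(1 / (s - 1))))))
        ≤ ∫ _t in Set.Icc (0 : ℝ) 1, Real.exp (-(c₁ * u)) * K := by
          apply integral_mono_of_nonneg
          · exact Filter.Eventually.of_forall fun t =>
              integral_nonneg fun x => Real.exp_nonneg _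
          · refine integrableOn_const (ne_of_lt ?_) enorm_ne_top
            rw [Real.volume_Icc]
            exact ENNReal.ofReal_lt_top
          · exact (ae_restrict_iff' measurableSet_Icc).mpr
              (Filter.Eventually.of_forall fun t ht =>
                inner_bound n hn hs hC hc₀ hC₀ hh hh1 (hω t ht.1 ht.2).1 (hω t ht.1 ht.2).2)
      _ = Real.exp (-(c₁ * u)) * K := by
          rw [setIntegral_const, Real.volume_real_Icc]
          norm_num
  have hhn : h ^ (-(n : ℝ)) ≤ u ^ m := by
    have h1 : h ^ (-(n : ℝ)) = u ^ ((n:ℝ) * s) := by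
      rw [hudef, ← Real.rpow_mul hh.le]
      congr 1
      field_simp
    rw [h1]
    calc u ^ ((n:ℝ) * s) ≤ u ^ (m : ℝ) :=
          Real.rpow_le_rpow_of_exponent_le hu1 (Nat.le_ceil _)
      _ = u ^ m := Real.rpow_natCast u m
  have hfact : u ^ m * Real.exp (-(c₁/2) * u) ≤ (Nat.factorial m : ℝ) * (2/c₁)^m := by
    have hp : (c₁/2 * u) ^ m / (Nat.factorial m : ℝ) ≤ Real.exp (c₁/2 * u) :=
      Real.pow_div_factorial_le_exp _ (by positivity) m
    rw [div_le_iff₀ (by positivity : (0:ℝ) < (Nat.factorial m : ℝ))] at hp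
    have hq : (c₁/2)^m * u^m ≤ (Nat.factorial m : ℝ) * Real.exp (c₁/2 * u) := by
      calc (c₁/2)^m * u^m = (c₁/2 * u)^m := (mul_pow _ _ _).symm
        _ ≤ Real.exp (c₁/2 * u) * (Nat.factorial m : ℝ) := hp
        _ = (Nat.factorial m : ℝ) * Real.exp (c₁/2 * u) := mul_comm _ _
    have hinv : ((2:ℝ)/c₁)^m * (c₁/2)^m = 1 := by
      rw [← mul_pow]
      field_simp
      exact one_pow m
    have h3 : u ^ m ≤ (2/c₁)^m * ((Nat.factorial m : ℝ) * Real.exp (c₁/2 * u)) := by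
      calc u ^ m = (2/c₁)^m * ((c₁/2)^m * u^m) := by rw [← mul_assoc, hinv, one_mul]
        _ ≤ _ := mul_le_mul_of_nonneg_left hq (by positivity)
    calc u^m * Real.exp (-(c₁/2) * u)
        ≤ ((2/c₁)^m * ((Nat.factorial m : ℝ) * Real.exp (c₁/2 * u))) * Real.exp (-(c₁/2) * u) :=
          mul_le_mul_of_nonneg_right h3 (Real.exp_nonneg _)
      _ = (Nat.factorial m : ℝ) * (2/c₁)^m * (Real.exp (c₁/2 * u) * Real.exp (-(c₁/2) * u)) := by ring
      _ = (Nat.factorial m : ℝ) * (2/c₁)^m := by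
          rw [← Real.exp_add, show c₁/2 * u + -(c₁/2) * u = 0 by ring, Real.exp_zero, mul_one]
  have hrpnn : (0:ℝ) ≤ h ^ (-(n:ℝ)) := Real.rpow_nonneg hh.le _
  calc h ^ (-(n : ℝ)) *
          (∫ t in Set.Icc (0 : ℝ) 1, ∫ x : Fin n → ℂ,
            Real.exp (-(Fw ((1 - t) * ω₁ + t * ω₂) x) / h -
              (if ((1 - t) * ω₁ + t * ω₂) < euclNorm x then
                C * ((1 - t) * ω₁ + t * ω₂) ^ (-(1 / (s - 1)))
              else
                C * euclNorm x ^ (-(1 / (s - 1))))))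
      ≤ h ^ (-(n : ℝ)) * (Real.exp (-(c₁ * u)) * K) :=
        mul_le_mul_of_nonneg_left houter hrpnn
    _ ≤ u ^ m * (Real.exp (-(c₁ * u)) * (K + 1)) := by
        have h4 : Real.exp (-(c₁ * u)) * K ≤ Real.exp (-(c₁ * u)) * (K + 1) := by
          nlinarith [Real.exp_nonneg (-(c₁ * u))]
        exact mul_le_mul hhn h4 (by positivity) (by positivity)
    _ = (K + 1) * (u ^ m * Real.exp (-(c₁/2) * u)) * Real.exp (-(c₁/2) * u) := by
        rw [show -(c₁ * u) = -(c₁/2) * u + -(c₁/2) * u by ring, Real.exp_add]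
        ring
    _ ≤ (K + 1) * ((Nat.factorial m : ℝ) * (2/c₁)^m) * Real.exp (-(c₁/2) * u) := by
        apply mul_le_mul_of_nonneg_right _ (Real.exp_nonneg _)
        exact mul_le_mul_of_nonneg_left hfact (by linarith)
    _ = (K + 1) * ((Nat.factorial m : ℝ) * (2/c₁)^m) * Real.exp (-(c₁ / 2) * u) := by ring
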